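/- Let $D \subset \mathbb{C}^2$ be a domain and $\eta$ a pseudometric on $D$ such that for each $z \in D$ the set of zeros of the Busemann pseudometric $\widehat\eta(z;\cdot)$ is a nontrivial linear subspace (codimension at most 1). If $\widehat\eta$ is upper semicontinuous at $(z, X)$, then $\widetilde{\mathbb{W}}\eta$ is upper semicontinuous at $(z, X)$; indeed in this degenerate case $\widetilde{\mathbb{W}}\eta(z;\cdot) = \widehat\eta(z;\cdot)$. -/

import Mathlib

/-- A positive-semidefinite Hermitian form on a complex module (conjugate-linear in the
first variable). -/
structure HermSemiForm (E : Type*) [AddCommGroup E] [Module ℂ E] where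
  toFun : E → E → ℂ
  add_left : ∀ x y z, toFun (x + y) z = toFun x z + toFun y z
  smul_left : ∀ (c : ℂ) (x y : E), toFun (c • x) y = starRingEnd ℂ c * toFun x y
  conj_symm : ∀ x y, toFun y x = starRingEnd ℂ (toFun x y)
  nonneg : ∀ x, 0 ≤ (toFun x x).re

/-- The Busemann pseudometric associated to a pseudometric `η`:
`η̂(z;X) = sup { p(X) : p a ℂ-seminorm with p ≤ η(z;·) }`. -/
noncomputable def busemann (η : (ℂ × ℂ) → (ℂ × ℂ) → ℝ) (z X : ℂ × ℂ) : ℝ :=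
  sSup {r : ℝ | ∃ p : Seminorm ℂ (ℂ × ℂ), (∀ Y, p Y ≤ η z Y) ∧ r = p X}

/-- The Wu pseudometric `𝕎̃η(z;X)`: the supremum of the Hermitian seminorms
dominated by `η(z;·)`, evaluated at `X`. -/
noncomputable def wuTilde (η : (ℂ × ℂ) → (ℂ × ℂ) → ℝ) (z X : ℂ × ℂ) : ℝ :=
  sSup {r : ℝ | ∃ s : HermSemiForm (ℂ × ℂ),
    (∀ Y, Real.sqrt ((s.toFun Y Y).re) ≤ η z Y) ∧ r = Real.sqrt ((s.toFun X X).re)}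

namespace WuAux

/-! ### Hermitian form lemmas -/

lemma herm_add_right (s : HermSemiForm (ℂ × ℂ)) (x y w : ℂ × ℂ) :
    s.toFun x (y + w) = s.toFun x y + s.toFun x w := by
  rw [s.conj_symm, s.add_left, map_add, ← s.conj_symm, ← s.conj_symm]

lemma herm_smul_right (s : HermSemiForm (ℂ × ℂ)) (c : ℂ) (x y : ℂ × ℂ) :
    s.toFun x (c • y) = c * s.toFun x y := by
  rw [s.conj_symm, s.smul_left, map_mul, ← s.conj_symm]
  simp

lemma herm_re_expand (s : HermSemiForm (ℂ × ℂ)) (x y : ℂ × ℂ) (t : ℝ) :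
    (s.toFun (x + (t : ℂ) • y) (x + (t : ℂ) • y)).re
      = (s.toFun y y).re * (t * t) + (2 * (s.toFun x y).re) * t + (s.toFun x x).re := by
  simp only [s.add_left, herm_add_right s, s.smul_left, herm_smul_right s, s.conj_symm x y]
  simp only [Complex.add_re, Complex.mul_re, Complex.conj_re, Complex.conj_im,
    Complex.ofReal_re, Complex.ofReal_im]
  ring

/-- Cauchy–Schwarz for the real part. -/
lemma herm_re_le (s : HermSemiForm (ℂ × ℂ)) (x y : ℂ × ℂ) :
    (s.toFun x y).re ≤ Real.sqrt ((s.toFun x x).re) * Real.sqrt ((s.toFun y y).re) := by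
  have hquad : ∀ t : ℝ,
      0 ≤ (s.toFun y y).re * (t * t) + (2 * (s.toFun x y).re) * t + (s.toFun x x).re := by
    intro t
    have := s.nonneg (x + (t : ℂ) • y)
    rwa [herm_re_expand] at this
  have hd := discrim_le_zero hquad
  rw [discrim] at hd
  have h1 : (s.toFun x y).re ^ 2 ≤ (s.toFun x x).re * (s.toFun y y).re := by nlinarith [hd]
  have h2 : (s.toFun x y).re ≤ Real.sqrt ((s.toFun x x).re * (s.toFun y y).re) := by
    calc (s.toFun x y).re ≤ |(s.toFun x y).re| := le_abs_self _
      _ = Real.sqrt ((s.toFun x y).re ^ 2) := (Real.sqrt_sq_eq_abs _).symm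
      _ ≤ Real.sqrt ((s.toFun x x).re * (s.toFun y y).re) := Real.sqrt_le_sqrt h1
  rwa [Real.sqrt_mul (s.nonneg x)] at h2

/-- The seminorm associated to a positive-semidefinite Hermitian form. -/
noncomputable def hermSeminorm (s : HermSemiForm (ℂ × ℂ)) : Seminorm ℂ (ℂ × ℂ) :=
  Seminorm.of (fun x => Real.sqrt ((s.toFun x x).re))
    (by
      intro x y
      have hx := s.nonneg x
      have hy := s.nonneg y
      have hexp : (s.toFun (x + y) (x + y)).re
          = (s.toFun y y).re * (1 * 1) + (2 * (s.toFun x y).re) * 1 + (s.toFun x x).re := by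
        have := herm_re_expand s x y 1
        simpa using this
      have hcs := herm_re_le s x y
      have hle : (s.toFun (x + y) (x + y)).re
          ≤ (Real.sqrt ((s.toFun x x).re) + Real.sqrt ((s.toFun y y).re)) ^ 2 := by
        rw [hexp]
        have hxx : Real.sqrt ((s.toFun x x).re) ^ 2 = (s.toFun x x).re := Real.sq_sqrt hx
        have hyy : Real.sqrt ((s.toFun y y).re) ^ 2 = (s.toFun y y).re := Real.sq_sqrt hy
        nlinarith [hcs]
      calc Real.sqrt ((s.toFun (x + y) (x + y)).re)
          ≤ Real.sqrt ((Real.sqrt ((s.toFun x x).re) + Real.sqrt ((s.toFun y y).re)) ^ 2) :=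
            Real.sqrt_le_sqrt hle
        _ = Real.sqrt ((s.toFun x x).re) + Real.sqrt ((s.toFun y y).re) :=
            Real.sqrt_sq (by positivity))
    (by
      intro c x
      show Real.sqrt ((s.toFun (c • x) (c • x)).re) = ‖c‖ * Real.sqrt ((s.toFun x x).re)
      have h : s.toFun (c • x) (c • x) = (Complex.normSq c : ℂ) * s.toFun x x := by
        rw [s.smul_left, herm_smul_right, ← mul_assoc, ← Complex.normSq_eq_conj_mul_self]
      rw [h, Complex.re_ofReal_mul, Real.sqrt_mul (Complex.normSq_nonneg c),
        Complex.norm_def])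

lemma hermSeminorm_apply (s : HermSemiForm (ℂ × ℂ)) (x : ℂ × ℂ) :
    hermSeminorm s x = Real.sqrt ((s.toFun x x).re) := rfl

/-! ### Busemann seminorm lemmas -/

lemma zero_mem_busSet (η : (ℂ × ℂ) → (ℂ × ℂ) → ℝ) (z : ℂ × ℂ)
    (hpos : ∀ Y, 0 ≤ η z Y) (X : ℂ × ℂ) :
    (0 : ℝ) ∈ {r : ℝ | ∃ p : Seminorm ℂ (ℂ × ℂ), (∀ Y, p Y ≤ η z Y) ∧ r = p X} :=
  ⟨0, fun Y => by simpa using hpos Y, by simp⟩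

lemma bdd_busSet (η : (ℂ × ℂ) → (ℂ × ℂ) → ℝ) (z : ℂ × ℂ)
    (M : ℝ) (hM : ∀ X, η z X ≤ M * ‖X‖) (X : ℂ × ℂ) :
    BddAbove {r : ℝ | ∃ p : Seminorm ℂ (ℂ × ℂ), (∀ Y, p Y ≤ η z Y) ∧ r = p X} := by
  refine ⟨M * ‖X‖, ?_⟩
  rintro r ⟨p, hp, rfl⟩
  exact (hp X).trans (hM X)

section Bus

variable {η : (ℂ × ℂ) → (ℂ × ℂ) → ℝ} {z : ℂ × ℂ}

lemma seminorm_le_b (M : ℝ) (hM : ∀ X, η z X ≤ M * ‖X‖)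
    (p : Seminorm ℂ (ℂ × ℂ)) (hp : ∀ Y, p Y ≤ η z Y) (X : ℂ × ℂ) :
    p X ≤ busemann η z X :=
  le_csSup (bdd_busSet η z M hM X) ⟨p, hp, rfl⟩

lemma b_nonneg (hpos : ∀ Y, 0 ≤ η z Y) (M : ℝ) (hM : ∀ X, η z X ≤ M * ‖X‖) (X : ℂ × ℂ) :
    0 ≤ busemann η z X :=
  le_csSup (bdd_busSet η z M hM X) (zero_mem_busSet η z hpos X)

lemma b_le_eta (hpos : ∀ Y, 0 ≤ η z Y) (X : ℂ × ℂ) : busemann η z X ≤ η z X := by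
  refine csSup_le ⟨0, zero_mem_busSet η z hpos X⟩ ?_
  rintro r ⟨p, hp, rfl⟩
  exact hp X

lemma b_add (hpos : ∀ Y, 0 ≤ η z Y) (M : ℝ) (hM : ∀ X, η z X ≤ M * ‖X‖) (X Y : ℂ × ℂ) :
    busemann η z (X + Y) ≤ busemann η z X + busemann η z Y := by
  refine csSup_le ⟨0, zero_mem_busSet η z hpos (X + Y)⟩ ?_
  rintro r ⟨p, hp, rfl⟩
  calc p (X + Y) ≤ p X + p Y := map_add_le_add p X Y
    _ ≤ busemann η z X + busemann η z Y :=
      add_le_add (seminorm_le_b M hM p hp X) (seminorm_le_b M hM p hp Y)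

lemma b_smul_le (hpos : ∀ Y, 0 ≤ η z Y) (M : ℝ) (hM : ∀ X, η z X ≤ M * ‖X‖)
    (c : ℂ) (X : ℂ × ℂ) :
    busemann η z (c • X) ≤ ‖c‖ * busemann η z X := by
  refine csSup_le ⟨0, zero_mem_busSet η z hpos (c • X)⟩ ?_
  rintro r ⟨p, hp, rfl⟩
  rw [map_smul_eq_mul]
  exact mul_le_mul_of_nonneg_left (seminorm_le_b M hM p hp X) (norm_nonneg c)

lemma b_smul (hpos : ∀ Y, 0 ≤ η z Y) (M : ℝ) (hM : ∀ X, η z X ≤ M * ‖X‖)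
    (c : ℂ) (X : ℂ × ℂ) :
    busemann η z (c • X) = ‖c‖ * busemann η z X := by
  rcases eq_or_ne c 0 with rfl | hc
  · simp only [zero_smul, norm_zero, zero_mul]
    refine le_antisymm ?_ (b_nonneg hpos M hM 0)
    refine csSup_le ⟨0, zero_mem_busSet η z hpos 0⟩ ?_
    rintro r ⟨p, hp, rfl⟩
    simp
  · refine le_antisymm (b_smul_le hpos M hM c X) ?_
    have h := b_smul_le hpos M hM c⁻¹ (c • X)
    rw [smul_smul, inv_mul_cancel₀ hc, one_smul, norm_inv] at h
    have hc' : (0:ℝ) < ‖c‖ := norm_pos_iff.mpr hc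
    calc ‖c‖ * busemann η z X ≤ ‖c‖ * (‖c‖⁻¹ * busemann η z (c • X)) :=
          mul_le_mul_of_nonneg_left h (le_of_lt hc')
      _ = busemann η z (c • X) := by
          rw [← mul_assoc, mul_inv_cancel₀ (ne_of_gt hc'), one_mul]

end Bus

/-! ### The linear functional `phi` -/

noncomputable def phi (Y0 X : ℂ × ℂ) : ℂ := Y0.2 * X.1 - Y0.1 * X.2

lemma phi_add (Y0 X Y : ℂ × ℂ) : phi Y0 (X + Y) = phi Y0 X + phi Y0 Y := by
  simp only [phi, Prod.fst_add, Prod.snd_add]; ring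

lemma phi_smul (Y0 : ℂ × ℂ) (c : ℂ) (X : ℂ × ℂ) : phi Y0 (c • X) = c * phi Y0 X := by
  simp only [phi, Prod.smul_fst, Prod.smul_snd, smul_eq_mul]; ring

/-- elements of the kernel of `phi Y0` are multiples of `Y0` -/
lemma phi_ker (Y0 : ℂ × ℂ) (hY0 : Y0 ≠ 0) (w : ℂ × ℂ) (hw : phi Y0 w = 0) :
    ∃ c : ℂ, w = c • Y0 := by
  have hw' : Y0.2 * w.1 = Y0.1 * w.2 := by
    have := sub_eq_zero.mp hw
    exact this
  rcases eq_or_ne Y0.1 0 with h1 | h1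
  · have h2 : Y0.2 ≠ 0 := fun h2 => hY0 (Prod.ext h1 h2)
    have hw1 : w.1 = 0 := by
      have : Y0.2 * w.1 = 0 := by rw [hw', h1, zero_mul]
      exact (mul_eq_zero.mp this).resolve_left h2
    refine ⟨w.2 / Y0.2, Prod.ext ?_ ?_⟩
    · simp [hw1, h1, Prod.smul_fst]
    · simp only [Prod.smul_snd, smul_eq_mul]
      field_simp
  · refine ⟨w.1 / Y0.1, Prod.ext ?_ ?_⟩
    · simp only [Prod.smul_fst, smul_eq_mul]
      field_simp
    · simp only [Prod.smul_snd, smul_eq_mul]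
      field_simp
      linear_combination -hw'

noncomputable def evec (Y0 : ℂ × ℂ) : ℂ × ℂ := (starRingEnd ℂ Y0.2, -starRingEnd ℂ Y0.1)

lemma phi_evec (Y0 : ℂ × ℂ) :
    phi Y0 (evec Y0) = ((Complex.normSq Y0.2 + Complex.normSq Y0.1 : ℝ) : ℂ) := by
  simp only [phi, evec, mul_neg, sub_neg_eq_add, Complex.mul_conj]
  push_cast
  ring

lemma phi_evec_ne (Y0 : ℂ × ℂ) (hY0 : Y0 ≠ 0) : phi Y0 (evec Y0) ≠ 0 := by
  rw [phi_evec, Ne, Complex.ofReal_eq_zero]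
  intro h
  have h1 : Complex.normSq Y0.2 = 0 ∧ Complex.normSq Y0.1 = 0 := by
    constructor <;> nlinarith [Complex.normSq_nonneg Y0.1, Complex.normSq_nonneg Y0.2]
  exact hY0 (Prod.ext (Complex.normSq_eq_zero.mp h1.2) (Complex.normSq_eq_zero.mp h1.1))

section Formula

variable {η : (ℂ × ℂ) → (ℂ × ℂ) → ℝ} {z : ℂ × ℂ}

/-- `busemann` vanishes on the kernel of `phi`. -/
lemma b_ker (hpos : ∀ Y, 0 ≤ η z Y) (M : ℝ) (hM : ∀ X, η z X ≤ M * ‖X‖)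
    (Y0 : ℂ × ℂ) (hY0 : Y0 ≠ 0) (hbY0 : busemann η z Y0 = 0)
    (w : ℂ × ℂ) (hw : phi Y0 w = 0) : busemann η z w = 0 := by
  obtain ⟨c, rfl⟩ := phi_ker Y0 hY0 w hw
  rw [b_smul hpos M hM, hbY0, mul_zero]

/-- the structure formula for a degenerate Busemann seminorm on `ℂ²`. -/
lemma b_formula (hpos : ∀ Y, 0 ≤ η z Y) (M : ℝ) (hM : ∀ X, η z X ≤ M * ‖X‖)
    (Y0 : ℂ × ℂ) (hY0 : Y0 ≠ 0) (hbY0 : busemann η z Y0 = 0) (X : ℂ × ℂ) :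
    busemann η z X
      = busemann η z (evec Y0) / ‖phi Y0 (evec Y0)‖ * ‖phi Y0 X‖ := by
  set e := evec Y0 with he
  set c : ℂ := phi Y0 X / phi Y0 e with hc
  set w : ℂ × ℂ := X - c • e with hwdef
  have hX : X = c • e + w := by rw [hwdef]; abel
  have hφw : phi Y0 w = 0 := by
    have h1 : phi Y0 X = phi Y0 (c • e) + phi Y0 w := by rw [hX, phi_add]
    rw [phi_smul, hc, div_mul_cancel₀ _ (phi_evec_ne Y0 hY0)] at h1
    exact (left_eq_add.mp h1)
  have hbw : busemann η z w = 0 := b_ker hpos M hM Y0 hY0 hbY0 w hφw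
  have hbnw : busemann η z (-w) = 0 := by
    have hneg : (-w) = ((-1 : ℂ)) • w := by simp
    rw [hneg, b_smul hpos M hM]
    simp [hbw]
  have hce : busemann η z (c • e) = ‖c‖ * busemann η z e := b_smul hpos M hM c e
  have h1 : busemann η z X ≤ ‖c‖ * busemann η z e := by
    calc busemann η z X = busemann η z (c • e + w) := by rw [← hX]
      _ ≤ busemann η z (c • e) + busemann η z w := b_add hpos M hM _ _
      _ = ‖c‖ * busemann η z e := by rw [hce, hbw, add_zero]
  have h2 : ‖c‖ * busemann η z e ≤ busemann η z X := by
    have hxe : c • e = X + (-w) := by rw [hwdef]; abel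
    calc ‖c‖ * busemann η z e = busemann η z (c • e) := hce.symm
      _ = busemann η z (X + (-w)) := by rw [hxe]
      _ ≤ busemann η z X + busemann η z (-w) := b_add hpos M hM _ _
      _ = busemann η z X := by rw [hbnw, add_zero]
  have heq : busemann η z X = ‖c‖ * busemann η z e := le_antisymm h1 h2
  rw [heq, hc, norm_div]
  ring

end Formula

/-! ### The Hermitian forms we need -/

def zeroHerm : HermSemiForm (ℂ × ℂ) :=
  ⟨fun _ _ => 0, by simp, by simp, by simp, by simp⟩

noncomputable def degHerm (Y0 : ℂ × ℂ) (t : ℝ) : HermSemiForm (ℂ × ℂ) where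
  toFun x y := (t : ℂ) ^ 2 * starRingEnd ℂ (phi Y0 x) * phi Y0 y
  add_left x y w := by rw [phi_add, map_add]; ring
  smul_left c x y := by rw [phi_smul, map_mul]; ring
  conj_symm x y := by
    simp only [map_mul, map_pow, Complex.conj_ofReal, Complex.conj_conj]
    ring
  nonneg x := by
    have h : ((t : ℂ) ^ 2 * starRingEnd ℂ (phi Y0 x) * phi Y0 x)
        = ((t ^ 2 * Complex.normSq (phi Y0 x) : ℝ) : ℂ) := by
      rw [mul_assoc, ← Complex.normSq_eq_conj_mul_self]
      push_cast
      ring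
    rw [h, Complex.ofReal_re]
    exact mul_nonneg (sq_nonneg t) (Complex.normSq_nonneg _)

lemma degHerm_diag (Y0 : ℂ × ℂ) (t : ℝ) (ht : 0 ≤ t) (x : ℂ × ℂ) :
    Real.sqrt (((degHerm Y0 t).toFun x x).re) = t * ‖phi Y0 x‖ := by
  have h : ((degHerm Y0 t).toFun x x)
      = ((t ^ 2 * Complex.normSq (phi Y0 x) : ℝ) : ℂ) := by
    show ((t : ℂ) ^ 2 * starRingEnd ℂ (phi Y0 x) * phi Y0 x) = _
    rw [mul_assoc, ← Complex.normSq_eq_conj_mul_self]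
    push_cast
    ring
  rw [h, Complex.ofReal_re, Real.sqrt_mul (sq_nonneg t), Real.sqrt_sq ht,
    Complex.norm_def]

/-! ### Main equality -/

lemma wu_eq_bus {η : (ℂ × ℂ) → (ℂ × ℂ) → ℝ} {z : ℂ × ℂ}
    (hpos : ∀ Y, 0 ≤ η z Y) (M : ℝ) (hM : ∀ X, η z X ≤ M * ‖X‖)
    (Y0 : ℂ × ℂ) (hY0 : Y0 ≠ 0) (hbY0 : busemann η z Y0 = 0) (X : ℂ × ℂ) :
    wuTilde η z X = busemann η z X := by
  set t : ℝ := busemann η z (evec Y0) / ‖phi Y0 (evec Y0)‖ with ht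
  have ht0 : 0 ≤ t := div_nonneg (b_nonneg hpos M hM _) (norm_nonneg _)
  have hform : ∀ Y, busemann η z Y = t * ‖phi Y0 Y‖ :=
    fun Y => b_formula hpos M hM Y0 hY0 hbY0 Y
  refine le_antisymm ?_ ?_
  · -- wuTilde ≤ busemann
    refine csSup_le ⟨0, zeroHerm, fun Y => by simpa [zeroHerm] using hpos Y,
      by simp [zeroHerm]⟩ ?_
    rintro r ⟨s, hs, rfl⟩
    have hp : ∀ Y, hermSeminorm s Y ≤ η z Y := by
      intro Y
      rw [hermSeminorm_apply]
      exact hs Y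
    have := seminorm_le_b M hM (hermSeminorm s) hp X
    rwa [hermSeminorm_apply] at this
  · -- busemann ≤ wuTilde
    have hmem : busemann η z X ∈ {r : ℝ | ∃ s : HermSemiForm (ℂ × ℂ),
        (∀ Y, Real.sqrt ((s.toFun Y Y).re) ≤ η z Y) ∧
        r = Real.sqrt ((s.toFun X X).re)} := by
      refine ⟨degHerm Y0 t, fun Y => ?_, ?_⟩
      · rw [degHerm_diag Y0 t ht0, ← hform Y]
        exact b_le_eta hpos Y
      · rw [degHerm_diag Y0 t ht0]
        exact hform X
    refine le_csSup ⟨η z X, ?_⟩ hmem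
    rintro r ⟨s, hs, rfl⟩
    exact hs X

end WuAux

theorem wuTilde_eq_busemann_degenerate (D : Set (ℂ × ℂ)) (hD : IsOpen D)
    (hDconn : IsConnected D)
    (η : (ℂ × ℂ) → (ℂ × ℂ) → ℝ)
    (hηpos : ∀ z X, 0 ≤ η z X)
    (hηhom : ∀ z ∈ D, ∀ (c : ℂ) (X : ℂ × ℂ), η z (c • X) = ‖c‖ * η z X)
    (hηbdd : ∀ z ∈ D, ∃ M : ℝ, ∀ X, η z X ≤ M * ‖X‖)
    (hdeg : ∀ z ∈ D, ∃ Y : ℂ × ℂ, Y ≠ 0 ∧ busemann η z Y = 0) :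
    ∀ z ∈ D, ∀ X : ℂ × ℂ,
      wuTilde η z X = busemann η z X ∧
      (UpperSemicontinuousWithinAt (fun p : (ℂ × ℂ) × (ℂ × ℂ) => busemann η p.1 p.2)
          (D ×ˢ (Set.univ : Set (ℂ × ℂ))) (z, X) →
        UpperSemicontinuousWithinAt (fun p : (ℂ × ℂ) × (ℂ × ℂ) => wuTilde η p.1 p.2)
          (D ×ˢ (Set.univ : Set (ℂ × ℂ))) (z, X)) := by
  have key : ∀ z' ∈ D, ∀ X' : ℂ × ℂ, wuTilde η z' X' = busemann η z' X' := by
    intro z' hz' X'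
    obtain ⟨M, hM⟩ := hηbdd z' hz'
    obtain ⟨Y0, hY0, hbY0⟩ := hdeg z' hz'
    exact WuAux.wu_eq_bus (hηpos z') M hM Y0 hY0 hbY0 X'
  intro z hz X
  refine ⟨key z hz X, ?_⟩
  intro hu y hy
  have hy' : busemann η z X < y := by
    rw [← key z hz X]
    exact hy
  filter_upwards [hu y hy', eventually_mem_nhdsWithin] with p h1 h2
  have hp1 : p.1 ∈ D := (Set.mem_prod.mp h2).1
  calc wuTilde η p.1 p.2 = busemann η p.1 p.2 := key p.1 hp1 p.2
    _ < y := h1
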